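/- Let (A,B,C,D) define a linear system over a field F with state dimension s, and suppose the input and output sequences satisfy u_i = y_i = 0 for all i > γ+μ while the trajectory starts at x_0 = 0. Then for every w ∈ ℕ₀: C A^{γ+μ+w} B u_0 + C A^{γ+μ+w-1} B u_1 + ... + C A^w B u_{γ+μ} = 0. -/

import Mathlib

open Finset

lemma mulVec_sum' {m p F : Type*} [Fintype p] [Field F] (M : Matrix m p F)
    (s : Finset ℕ) (v : ℕ → p → F) :
    M.mulVec (∑ t ∈ s, v t) = ∑ t ∈ s, M.mulVec (v t) :=
  map_sum M.mulVecLin v s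

/-- If inputs and outputs of the system vanish after time `γ+μ` (with zero initial
state), then `C A^{γ+μ+w} B u_0 + ⋯ + C A^w B u_{γ+μ} = 0` for every `w ∈ ℕ₀`. -/
theorem stmt11 (F : Type*) [Field F] (s n k γ μ : ℕ)
    (A : Matrix (Fin s) (Fin s) F) (B : Matrix (Fin s) (Fin k) F)
    (C : Matrix (Fin (n - k)) (Fin s) F) (D : Matrix (Fin (n - k)) (Fin k) F)
    (u : ℕ → Fin k → F) (y : ℕ → Fin (n - k) → F) (x : ℕ → Fin s → F)
    (h0 : x 0 = 0)
    (hrec : ∀ τ, x (τ + 1) = A.mulVec (x τ) + B.mulVec (u τ))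
    (hout : ∀ τ, y τ = C.mulVec (x τ) + D.mulVec (u τ))
    (hu : ∀ i, γ + μ < i → u i = 0)
    (hy : ∀ i, γ + μ < i → y i = 0) :
    ∀ w : ℕ, ∑ t ∈ range (γ + μ + 1), (C * A ^ (γ + μ + w - t) * B).mulVec (u t) = 0 := by
  set N := γ + μ with hN
  -- closed form for the state
  have hx : ∀ τ, x τ = ∑ t ∈ range τ, (A ^ (τ - 1 - t)).mulVec (B.mulVec (u t)) := by
    intro τ
    induction τ with
    | zero => simpa using h0
    | succ τ ih =>
      rw [hrec τ, ih, mulVec_sum', Finset.sum_range_succ]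
      congr 1
      · apply Finset.sum_congr rfl
        intro t ht
        rw [Finset.mem_range] at ht
        rw [show τ + 1 - 1 - t = (τ - 1 - t) + 1 from by omega, pow_succ',
          ← Matrix.mulVec_mulVec, Matrix.mulVec_mulVec]
      · simp
  intro w
  have hy0 := hy (N + 1 + w) (by omega)
  rw [hout (N + 1 + w), hu (N + 1 + w) (by omega), Matrix.mulVec_zero, add_zero,
    hx (N + 1 + w), mulVec_sum'] at hy0
  have hsplit : ∑ t ∈ range (N + 1 + w), C.mulVec ((A ^ (N + 1 + w - 1 - t)).mulVec (B.mulVec (u t)))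
      = ∑ t ∈ range (N + 1), (C * A ^ (N + w - t) * B).mulVec (u t) := by
    rw [show N + 1 + w = (N + 1) + w from rfl, Finset.sum_range_add]
    have h2 : ∑ i ∈ range w, C.mulVec ((A ^ (N + 1 + w - 1 - (N + 1 + i))).mulVec (B.mulVec (u (N + 1 + i)))) = 0 := by
      apply Finset.sum_eq_zero
      intro i _
      rw [hu (N + 1 + i) (by omega)]
      simp
    rw [h2, add_zero]
    apply Finset.sum_congr rfl
    intro t ht
    rw [Finset.mem_range] at ht
    have he : N + 1 + w - 1 - t = N + w - t := by omega
    rw [Matrix.mulVec_mulVec, Matrix.mulVec_mulVec, he]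
  rw [hsplit] at hy0
  exact hy0
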